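/- In an involutive category with an inner product combinator satisfying [IP.1], the following are equivalent: (a) one of [IP.2](a) or [IP.2](b) holds together with [IP.2](c): ⟨f††|g††⟩ = ι_A^{-1} ⋅ ⟨f|g⟩ ⋅ ι_{B†}; (b) both [IP.2](a) and [IP.2](b) hold. -/
import Mathlib


open CategoryTheory

universe v u

/-- An (achiral) involutive category: a contravariant endofunctor `(−)†`
together with a natural isomorphism `ι : X → X††` satisfying `ι_{X†} ≫ (ι_X)† = 1`. -/
structure Involutive (C : Type u) [Category.{v} C] where
  dob : C → C
  dmap : ∀ {X Y : C}, (X ⟶ Y) → (dob Y ⟶ dob X)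
  dmap_id : ∀ X : C, dmap (𝟙 X) = 𝟙 (dob X)
  dmap_comp : ∀ {X Y Z : C} (f : X ⟶ Y) (g : Y ⟶ Z), dmap (f ≫ g) = dmap g ≫ dmap f
  ι : ∀ X : C, X ⟶ dob (dob X)
  ιinv : ∀ X : C, dob (dob X) ⟶ X
  ι_hom_inv : ∀ X : C, ι X ≫ ιinv X = 𝟙 X
  ι_inv_hom : ∀ X : C, ιinv X ≫ ι X = 𝟙 (dob (dob X))
  ι_natural : ∀ {X Y : C} (f : X ⟶ Y), f ≫ ι Y = ι X ≫ dmap (dmap f)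
  ι_dagger : ∀ X : C, ι (dob X) ≫ dmap (ι X) = 𝟙 (dob X)

/-- A unitary structure on an involutive category: isomorphisms `φ_X : X → X†`
with `φ_{X†} = (φ_X⁻¹)†` and `φ_X ≫ φ_{X†} = ι_X`. -/
structure UnitaryStruct {C : Type u} [Category.{v} C] (D : Involutive C) where
  φ : ∀ X : C, X ⟶ D.dob X
  φinv : ∀ X : C, D.dob X ⟶ X
  φ_hom_inv : ∀ X : C, φ X ≫ φinv X = 𝟙 X
  φ_inv_hom : ∀ X : C, φinv X ≫ φ X = 𝟙 (D.dob X)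
  u1 : ∀ X : C, φ (D.dob X) = D.dmap (φinv X)
  u2 : ∀ X : C, φ X ≫ φ (D.dob X) = D.ι X

/-- An inner product combinator on an involutive category. -/
structure IPStruct {C : Type u} [Category.{v} C] (D : Involutive C) where
  ip : ∀ {A B X : C}, (A ⟶ X) → (B ⟶ X) → (A ⟶ D.dob B)

/-- The dual inner product `⟨h|k⟩^ι := ι_{A†} ≫ ⟨k†|h†⟩† ≫ ι_B⁻¹`. -/
def IPStruct.dual {C : Type u} [Category.{v} C] {D : Involutive C} (S : IPStruct D)
    {X A B : C} (h : X ⟶ A) (k : X ⟶ B) : D.dob A ⟶ B :=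
  D.ι (D.dob A) ≫ D.dmap (S.ip (D.dmap k) (D.dmap h)) ≫ D.ιinv B

/-- An inner product category: axioms [IP.1]–[IP.4]. -/
structure InnerProduct {C : Type u} [Category.{v} C] (D : Involutive C) extends IPStruct D where
  ip1 : ∀ {A B X Y Z : C} (f : A ⟶ X) (g : B ⟶ X) (h : Y ⟶ A) (k : Z ⟶ B),
    ip (h ≫ f) (k ≫ g) = h ≫ ip f g ≫ D.dmap k
  ip2a : ∀ {A B X : C} (f : A ⟶ X) (g : B ⟶ X),
    D.ι A ≫ toIPStruct.dual (D.dmap f) (D.dmap g) = ip f g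
  ip2b : ∀ {A B X : C} (f : A ⟶ X) (g : B ⟶ X),
    D.ι B ≫ D.dmap (ip f g) = ip g f
  ip3 : ∀ {A B X : C} (f : A ⟶ X) (g : B ⟶ X) (h k : X ⟶ B),
    h ≫ g = 𝟙 X → ip f g ≫ toIPStruct.dual h k = f ≫ k
  ip4 : ∀ {A X Z : C} (f : A ⟶ Z) (g : A ⟶ X) (h k : X ⟶ A),
    g ≫ h = 𝟙 A → toIPStruct.dual f g ≫ ip h k = D.dmap (k ≫ f)

/-- The inner product induced by a unitary structure: `⟨f|g⟩ := f ≫ φ_X ≫ g†`. -/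
def UnitaryStruct.uip {C : Type u} [Category.{v} C] {D : Involutive C} (U : UnitaryStruct D)
    {A B X : C} (f : A ⟶ X) (g : B ⟶ X) : A ⟶ D.dob B :=
  f ≫ U.φ X ≫ D.dmap g

/-- The dual inner product induced by a unitary structure. -/
def UnitaryStruct.udual {C : Type u} [Category.{v} C] {D : Involutive C} (U : UnitaryStruct D)
    {X A B : C} (h : X ⟶ A) (k : X ⟶ B) : D.dob A ⟶ B :=
  D.ι (D.dob A) ≫ D.dmap (U.uip (D.dmap k) (D.dmap h)) ≫ D.ιinv B

/-- The inner adjoint `f* := φ_B ≫ f† ≫ φ_A⁻¹` of `f : A ⟶ B`. -/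
def UnitaryStruct.adj {C : Type u} [Category.{v} C] {D : Involutive C} (U : UnitaryStruct D)
    {A B : C} (f : A ⟶ B) : B ⟶ A :=
  U.φ B ≫ D.dmap f ≫ U.φinv A

/-- [IP.2](a): `ι_A ≫ ⟨f†|g†⟩^ι = ⟨f|g⟩`. -/
def IP2a {C : Type u} [Category.{v} C] {D : Involutive C} (S : IPStruct D) : Prop :=
  ∀ {A B X : C} (f : A ⟶ X) (g : B ⟶ X),
    D.ι A ≫ S.dual (D.dmap f) (D.dmap g) = S.ip f g

/-- [IP.2](b): `ι_B ≫ ⟨f|g⟩† = ⟨g|f⟩`. -/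
def IP2b {C : Type u} [Category.{v} C] {D : Involutive C} (S : IPStruct D) : Prop :=
  ∀ {A B X : C} (f : A ⟶ X) (g : B ⟶ X),
    D.ι B ≫ D.dmap (S.ip f g) = S.ip g f

/-- [IP.2](c): `⟨f††|g††⟩ = ι_A⁻¹ ≫ ⟨f|g⟩ ≫ ι_{B†}`. -/
def IP2c {C : Type u} [Category.{v} C] {D : Involutive C} (S : IPStruct D) : Prop :=
  ∀ {A B X : C} (f : A ⟶ X) (g : B ⟶ X),
    S.ip (D.dmap (D.dmap f)) (D.dmap (D.dmap g)) = D.ιinv A ≫ S.ip f g ≫ D.ι (D.dob B)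

/-- In an involutive category with an inner product combinator satisfying [IP.1],
the following are equivalent: (a) one of [IP.2](a)/[IP.2](b) together with [IP.2](c);
(b) both [IP.2](a) and [IP.2](b). -/
lemma Involutive.dmap_ι {C : Type u} [Category.{v} C] (D : Involutive C) (X : C) :
    D.dmap (D.ι X) = D.ιinv (D.dob X) := by
  have h := D.ι_dagger X
  calc D.dmap (D.ι X) = (D.ιinv (D.dob X) ≫ D.ι (D.dob X)) ≫ D.dmap (D.ι X) := by
        rw [D.ι_inv_hom, Category.id_comp]
    _ = D.ιinv (D.dob X) := by rw [Category.assoc, h, Category.comp_id]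

lemma Involutive.dmap_ιinv {C : Type u} [Category.{v} C] (D : Involutive C) (X : C) :
    D.dmap (D.ιinv X) = D.ι (D.dob X) := by
  have h : D.dmap (D.ιinv X) ≫ D.dmap (D.ι X) = 𝟙 _ := by
    rw [← D.dmap_comp, D.ι_hom_inv, D.dmap_id]
  rw [D.dmap_ι] at h
  calc D.dmap (D.ιinv X)
      = D.dmap (D.ιinv X) ≫ D.ιinv (D.dob X) ≫ D.ι (D.dob X) := by
        rw [D.ι_inv_hom, Category.comp_id]
    _ = D.ι (D.dob X) := by rw [← Category.assoc, h, Category.id_comp]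

lemma core_lemma {C : Type u} [Category.{v} C] {D : Involutive C} {S : IPStruct D}
    (hc : IP2c S) {A B X : C} (f : A ⟶ X) (g : B ⟶ X) :
    D.ι A ≫ S.dual (D.dmap f) (D.dmap g) = D.ι A ≫ D.dmap (S.ip g f) := by
  unfold IPStruct.dual
  rw [hc g f, D.dmap_comp, D.dmap_comp, D.dmap_ιinv, D.dmap_ι]
  simp only [Category.assoc, D.ι_hom_inv, Category.comp_id]
  rw [← Category.assoc (D.ι (D.dob (D.dob A))), D.ι_hom_inv, Category.id_comp]

theorem ip2_equivalence {C : Type u} [Category.{v} C]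
    (D : Involutive C) (S : IPStruct D)
    (ip1 : ∀ {A B X Y Z : C} (f : A ⟶ X) (g : B ⟶ X) (h : Y ⟶ A) (k : Z ⟶ B),
      S.ip (h ≫ f) (k ≫ g) = h ≫ S.ip f g ≫ D.dmap k) :
    ((IP2a S ∨ IP2b S) ∧ IP2c S) ↔ (IP2a S ∧ IP2b S) := by
  constructor
  · rintro ⟨ha | hb, hc⟩
    · refine ⟨ha, fun {A B X} f g => ?_⟩
      rw [← ha g f, core_lemma hc g f]
    · refine ⟨fun {A B X} f g => ?_, hb⟩
      rw [core_lemma hc f g, hb g f]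
  · rintro ⟨ha, hb⟩
    refine ⟨Or.inl ha, fun {A B X} f g => ?_⟩
    have h1 : D.ι (D.dob (D.dob A)) ≫ D.dmap (S.ip (D.dmap (D.dmap g)) (D.dmap (D.dmap f)))
        = S.ip (D.dmap (D.dmap f)) (D.dmap (D.dmap g)) := hb _ _
    have h2 := ha f g
    unfold IPStruct.dual at h2
    rw [← Category.assoc, ← Category.assoc, Category.assoc (D.ι A), h1] at h2
    rw [← h2]
    simp only [Category.assoc, D.ι_hom_inv, Category.comp_id, ← Category.assoc,
      D.ι_inv_hom, Category.id_comp]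
    rw [Category.assoc, D.ι_inv_hom, Category.comp_id]
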